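/- Let X, Y be real Hilbert spaces, A : X → Y a bounded linear operator, F : X → ℝ ∪ {+∞} convex, positively 1-homogeneous and lower semicontinuous, and let f ∈ Y. Suppose u₁†, u₂† ∈ X both satisfy A u₁† = A u₂† = f and F(u₁†) = F(u₂†). If p ∈ Y is such that A* p ∈ ∂F(u₁†), then A* p ∈ ∂F(u₂†). -/
import Mathlib

open RealInnerProductSpace

variable {X Y : Type*} [NormedAddCommGroup X] [InnerProductSpace ℝ X] [CompleteSpace X]
  [NormedAddCommGroup Y] [InnerProductSpace ℝ Y] [CompleteSpace Y]

/-- The subdifferential of an extended-real-valued functional `F` at `x`. -/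
def subdiff (F : X → EReal) (x : X) : Set X :=
  {ξ : X | ∀ h : X, ((⟪ξ, h⟫ : ℝ) : EReal) ≤ F (x + h) - F x}

/-- The source condition set does not depend on the choice of minimal-`F` solution. -/
theorem source_condition_independent (A : X →L[ℝ] Y) (F : X → EReal)
    (hconv : ∀ x y : X, ∀ t : ℝ, 0 ≤ t → t ≤ 1 →
      F (t • x + (1 - t) • y) ≤ (t : EReal) * F x + ((1 - t : ℝ) : EReal) * F y)
    (hhom : ∀ l : ℝ, 0 < l → ∀ x : X, F (l • x) = (l : EReal) * F x)
    (hlsc : LowerSemicontinuous F)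
    (f : Y) (u₁ u₂ : X) (h₁ : A u₁ = f) (h₂ : A u₂ = f) (hF : F u₁ = F u₂)
    (p : Y) (hp : (ContinuousLinearMap.adjoint A) p ∈ subdiff F u₁) :
    (ContinuousLinearMap.adjoint A) p ∈ subdiff F u₂ := by
  intro h
  have key := hp (u₂ + h - u₁)
  have hsum : u₁ + (u₂ + h - u₁) = u₂ + h := by abel
  rw [hsum, hF] at key
  have hz : (⟪(ContinuousLinearMap.adjoint A) p, u₂ + h - u₁⟫ : ℝ)
      = ⟪(ContinuousLinearMap.adjoint A) p, h⟫ := by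
    have : u₂ + h - u₁ = h + (u₂ - u₁) := by abel
    simp [this, inner_add_right, ContinuousLinearMap.adjoint_inner_left, map_sub, h₁, h₂]
  rwa [hz] at key
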